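/- At the Dubrovin–Mazzocco singular point p₁ = (a,2,2), the derivative of g_x = s_z ∘ s_y (with A=B=C=2a+4, D=-(a²+8a+8)) has eigenvalues λ₁ = a²/2 - 1 + √(a⁴-4a²)/2, λ₂ = a²/2 - 1 - √(a⁴-4a²)/2, and λ₃ = 1; in particular for real a ∈ (-2,0)∪(0,2) the eigenvalues λ₁, λ₂ are a complex conjugate pair each of modulus one. -/

import Mathlib

noncomputable section

def gxMap (B C : ℂ) : ℂ × ℂ × ℂ → ℂ × ℂ × ℂ :=
  fun p => (p.1, -p.2.1 - p.1 * p.2.2 + B,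
    p.1 * p.2.1 + (p.1 ^ 2 - 1) * p.2.2 + C - B * p.1)

def Jgx (a : ℂ) : Matrix (Fin 3) (Fin 3) ℂ :=
  !![1, 0, 0; -2, -1, -a; 2 * a - 2, a, a ^ 2 - 1]

/-- At the Dubrovin–Mazzocco singular point p₁ = (a,2,2), the derivative of
g_x = s_z∘s_y (with A=B=C=2a+4) is the matrix Jgx a, whose eigenvalues are
λ₁ = a²/2 - 1 + s/2, λ₂ = a²/2 - 1 - s/2 (where s² = a⁴-4a²) and λ₃ = 1;
for real a ∈ (-2,0)∪(0,2), λ₁ and λ₂ are a complex conjugate pair of modulus one. -/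
theorem stmt7 (a s : ℂ) (hs : s ^ 2 = a ^ 4 - 4 * a ^ 2) :
    (∀ v : ℂ × ℂ × ℂ,
      fderiv ℂ (gxMap (2 * a + 4) (2 * a + 4)) (a, 2, 2) v
        = (v.1, -2 * v.1 - v.2.1 - a * v.2.2,
            (2 * a - 2) * v.1 + a * v.2.1 + (a ^ 2 - 1) * v.2.2))
    ∧
    (∀ lam : ℂ,
      Matrix.det (lam • (1 : Matrix (Fin 3) (Fin 3) ℂ) - Jgx a)
        = (lam - (a ^ 2 / 2 - 1 + s / 2)) * (lam - (a ^ 2 / 2 - 1 - s / 2)) * (lam - 1))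
    ∧
    (∀ t : ℝ, a = (t : ℂ) →
      (t ∈ Set.Ioo (-2 : ℝ) 0 ∨ t ∈ Set.Ioo (0 : ℝ) 2) →
      ‖a ^ 2 / 2 - 1 + s / 2‖ = 1 ∧
      ‖a ^ 2 / 2 - 1 - s / 2‖ = 1 ∧
      a ^ 2 / 2 - 1 - s / 2 = starRingEnd ℂ (a ^ 2 / 2 - 1 + s / 2)) := by
  refine ⟨?_, ?_, ?_⟩
  · intro v
    set p₀ : ℂ × ℂ × ℂ := (a, 2, 2) with hp₀
    have hx : HasFDerivAt (fun p : ℂ × ℂ × ℂ => p.1)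
        (ContinuousLinearMap.fst ℂ ℂ (ℂ × ℂ)) p₀ := hasFDerivAt_fst
    have hy : HasFDerivAt (fun p : ℂ × ℂ × ℂ => p.2.1)
        ((ContinuousLinearMap.fst ℂ ℂ ℂ).comp (ContinuousLinearMap.snd ℂ ℂ (ℂ × ℂ))) p₀ :=
      hasFDerivAt_fst.comp p₀ hasFDerivAt_snd
    have hz : HasFDerivAt (fun p : ℂ × ℂ × ℂ => p.2.2)
        ((ContinuousLinearMap.snd ℂ ℂ ℂ).comp (ContinuousLinearMap.snd ℂ ℂ (ℂ × ℂ))) p₀ :=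
      hasFDerivAt_snd.comp p₀ hasFDerivAt_snd
    have h2 := ((hy.neg.sub (hx.mul hz)).add_const (2 * a + 4))
    have h3 := ((((hx.mul hy).add ((((hx.mul hx)).sub_const 1).mul hz)).add_const
      (2 * a + 4)).sub (hx.const_mul (2 * a + 4)))
    have h := hx.prodMk (h2.prodMk h3)
    have hg : HasFDerivAt (gxMap (2 * a + 4) (2 * a + 4)) _ p₀ :=
      h.congr_of_eventuallyEq (Filter.Eventually.of_forall fun p => by
        simp only [gxMap, pow_two, Pi.mul_apply, Pi.neg_apply, Pi.sub_apply, Pi.add_apply])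
    rw [hg.fderiv]
    simp [hp₀]
    refine ⟨?_, ?_⟩ <;> ring
  · intro lam
    simp [Jgx, Matrix.det_fin_three, Matrix.smul_apply, Matrix.one_apply, Matrix.sub_apply]
    linear_combination ((lam - 1) / 4) * hs
  · intro t hat hmem
    subst hat
    set r : ℝ := t ^ 4 - 4 * t ^ 2 with hrdef
    have hr : s ^ 2 = (r : ℂ) := by rw [hrdef]; push_cast; exact hs
    have h1 : s.re * s.re - s.im * s.im = r := by
      have := congrArg Complex.re hr
      simpa [pow_two, Complex.mul_re] using this
    have h2 : s.re * s.im + s.im * s.re = 0 := by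
      have := congrArg Complex.im hr
      simpa [pow_two, Complex.mul_im] using this
    have ht2 : 0 < t ^ 2 ∧ t ^ 2 < 4 := by
      rcases hmem with ⟨h₁, h₂⟩ | ⟨h₁, h₂⟩ <;> constructor <;> nlinarith
    have hrneg : r < 0 := by
      rw [hrdef]
      nlinarith [mul_pos ht2.1 (show (0:ℝ) < 4 - t ^ 2 by linarith)]
    have hre : s.re = 0 := by
      rcases mul_eq_zero.mp (by linarith : s.re * s.im = 0) with h | h
      · exact h
      · exfalso; rw [h] at h1; nlinarith [sq_nonneg s.re]
    have hconjs : starRingEnd ℂ s = -s := by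
      apply Complex.ext <;> simp [hre]
    have hconj : (t : ℂ) ^ 2 / 2 - 1 - s / 2
        = starRingEnd ℂ ((t : ℂ) ^ 2 / 2 - 1 + s / 2) := by
      rw [map_add, map_sub, map_div₀, map_div₀, map_pow, hconjs, Complex.conj_ofReal,
        map_ofNat, map_one]
      ring
    have hprod1 : ((t : ℂ) ^ 2 / 2 - 1 + s / 2) * ((t : ℂ) ^ 2 / 2 - 1 - s / 2) = 1 := by
      linear_combination (-1 / 4 : ℂ) * hs
    have hnr : Complex.normSq ((t : ℂ) ^ 2 / 2 - 1 + s / 2) = 1 := by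
      have hn : (Complex.normSq ((t : ℂ) ^ 2 / 2 - 1 + s / 2) : ℂ) = 1 := by
        rw [← Complex.mul_conj, ← hconj]; exact hprod1
      exact_mod_cast hn
    have habs1 : ‖(t : ℂ) ^ 2 / 2 - 1 + s / 2‖ = 1 := by
      rw [Complex.norm_def, hnr, Real.sqrt_one]
    refine ⟨habs1, ?_, hconj⟩
    rw [hconj, Complex.norm_conj]
    exact habs1

end
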